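/- Let μ be a nonadditive measure and 0 < p,q < ∞. For any measurable f, (f)_{p,q} = 0 if and only if μ({|f| > c}) = 0 for every c > 0. If moreover μ is null-continuous, these are equivalent to μ({|f| > 0}) = 0. -/

import Mathlib

open scoped NNReal ENNReal
open ENNReal Filter Topology

variable {X : Type*} [MeasurableSpace X]

/-- The Sugeno integral of `g` w.r.t. a nonadditive measure `μ`:
`Su(μ,g) := sup_{t ∈ [0,∞)} min(t, μ({g > t}))`. -/
noncomputable def Su (μ : Set X → ℝ≥0∞) (g : X → ℝ≥0∞) : ℝ≥0∞ :=
  ⨆ t : ℝ≥0, min (t : ℝ≥0∞) (μ {x | (t : ℝ≥0∞) < g x})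

/-- The Sugeno-Lorentz prenorm `(f)_{p,q} := (Su(μ^{p/q}, (p/q)|f|^q))^{1/q}`. -/
noncomputable def SL (μ : Set X → ℝ≥0∞) (p q : ℝ) (f : X → ℝ) : ℝ≥0∞ :=
  (Su (fun A => μ A ^ (p / q)) (fun x => ENNReal.ofReal ((p / q) * |f x| ^ q))) ^ (1 / q)

/-- `(f)_{p,q} = 0` iff `μ({|f| > c}) = 0` for every `c > 0`; if `μ` is null-continuous
these are further equivalent to `μ({|f| > 0}) = 0`. -/
theorem SL_eq_zero_iff
    (μ : Set X → ℝ≥0∞) (h0 : μ ∅ = 0)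
    (hmono : ∀ ⦃A B : Set X⦄, MeasurableSet A → MeasurableSet B → A ⊆ B → μ A ≤ μ B)
    (p q : ℝ) (hp : 0 < p) (hq : 0 < q) (f : X → ℝ) (hf : Measurable f) :
    (SL μ p q f = 0 ↔ ∀ c : ℝ, 0 < c → μ {x | c < |f x|} = 0) ∧
    ((∀ N : ℕ → Set X, (∀ n, MeasurableSet (N n)) → Monotone N →
        (∀ n, μ (N n) = 0) → μ (⋃ n, N n) = 0) →
      (SL μ p q f = 0 ↔ μ {x | 0 < |f x|} = 0)) := by
  have hr : 0 < p / q := div_pos hp hq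
  have hq1 : (0:ℝ) < 1 / q := by positivity
  -- pointwise characterization of the level sets
  have hiff : ∀ t a : ℝ, 0 < t → 0 ≤ a →
      (t < (p / q) * a ^ q ↔ (t / (p / q)) ^ (1 / q) < a) := by
    intro t a ht ha
    rw [mul_comm, ← div_lt_iff₀ hr, one_div]
    exact (Real.rpow_inv_lt_iff_of_pos (by positivity) ha hq).symm
  -- level sets of the Sugeno integrand
  have hset : ∀ t : ℝ≥0, 0 < t →
      {x | (t : ℝ≥0∞) < ENNReal.ofReal ((p / q) * |f x| ^ q)}
        = {x | ((t : ℝ) / (p / q)) ^ (1 / q) < |f x|} := by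
    intro t ht
    ext x
    simp only [Set.mem_setOf_eq]
    rw [ENNReal.lt_ofReal_iff_toReal_lt ENNReal.coe_ne_top, ENNReal.coe_toReal]
    exact hiff _ _ ht (abs_nonneg _)
  -- the main equivalence
  have main : SL μ p q f = 0 ↔ ∀ c : ℝ, 0 < c → μ {x | c < |f x|} = 0 := by
    have hSL : SL μ p q f = 0 ↔
        Su (fun A => μ A ^ (p / q))
          (fun x => ENNReal.ofReal ((p / q) * |f x| ^ q)) = 0 := by
      rw [SL]
      constructor
      · intro h
        rcases ENNReal.rpow_eq_zero_iff.mp h with ⟨h1, _⟩ | ⟨_, h2⟩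
        · exact h1
        · linarith
      · intro h
        rw [h]
        exact ENNReal.zero_rpow_of_pos hq1
    rw [hSL, Su, ENNReal.iSup_eq_zero]
    constructor
    · intro h c hc
      set t : ℝ≥0 := ((p / q) * c ^ q).toNNReal with htdef
      have htpos : 0 < t := Real.toNNReal_pos.mpr (by positivity)
      have ht := h t
      have hne : (t : ℝ≥0∞) ≠ 0 := by
        simpa using htpos.ne'
      have hμ : μ {x | (t : ℝ≥0∞) < ENNReal.ofReal ((p / q) * |f x| ^ q)} ^ (p / q) = 0 := by
        rcases min_eq_bot.mp ht with h' | h'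
        · exact absurd h' hne
        · exact h'
      have hμ0 : μ {x | (t : ℝ≥0∞) < ENNReal.ofReal ((p / q) * |f x| ^ q)} = 0 := by
        rcases ENNReal.rpow_eq_zero_iff.mp hμ with ⟨h1, _⟩ | ⟨_, h2⟩
        · exact h1
        · linarith
      have hc' : ((t : ℝ) / (p / q)) ^ (1 / q) = c := by
        have : (t : ℝ) = (p / q) * c ^ q := Real.coe_toNNReal _ (by positivity)
        rw [this, mul_div_cancel_left₀ _ hr.ne', one_div,
          Real.rpow_rpow_inv hc.le hq.ne']
      rw [hset t htpos, hc'] at hμ0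
      exact hμ0
    · intro h t
      rcases eq_or_ne t 0 with rfl | ht
      · simp
      · have htpos : 0 < t := pos_iff_ne_zero.mpr ht
        have hcpos : 0 < ((t : ℝ) / (p / q)) ^ (1 / q) := by positivity
        rw [hset t htpos, h _ hcpos]
        simp [ENNReal.zero_rpow_of_pos hr]
  refine ⟨main, fun hnull => main.trans ⟨fun h => ?_, fun h c hc => ?_⟩⟩
  · -- null-continuity gives μ {0 < |f|} = 0
    set N : ℕ → Set X := fun n => {x | 1 / (n + 1 : ℝ) < |f x|} with hN
    have hmeas : ∀ n, MeasurableSet (N n) := fun n =>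
      measurableSet_lt measurable_const hf.abs
    have hmonoN : Monotone N := by
      intro m n hmn x hx
      have : 1 / (n + 1 : ℝ) ≤ 1 / (m + 1 : ℝ) := by
        apply one_div_le_one_div_of_le (by positivity)
        exact_mod_cast by exact_mod_cast add_le_add_left (Nat.cast_le.mpr hmn) 1
      exact lt_of_le_of_lt this hx
    have hzero : ∀ n, μ (N n) = 0 := fun n => h _ (by positivity)
    have hunion : (⋃ n, N n) = {x | 0 < |f x|} := by
      ext x
      simp only [Set.mem_iUnion, hN, Set.mem_setOf_eq]
      constructor
      · rintro ⟨n, hn⟩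
        exact lt_trans (by positivity) hn
      · intro hx
        obtain ⟨n, hn⟩ := exists_nat_one_div_lt hx
        exact ⟨n, hn⟩
    have := hnull N hmeas hmonoN hzero
    rwa [hunion] at this
  · -- monotonicity
    have h1 : MeasurableSet {x | c < |f x|} := measurableSet_lt measurable_const hf.abs
    have h2 : MeasurableSet {x | 0 < |f x|} := measurableSet_lt measurable_const hf.abs
    have hsub : {x | c < |f x|} ⊆ {x | 0 < |f x|} := fun x hx =>
      lt_trans hc hx
    exact le_antisymm ((hmono h1 h2 hsub).trans h.le) zero_le
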